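/- Let p be a prime number, k a field of characteristic p, and k' a perfect closure of k (a perfect field containing k which is purely inseparable over k, e.g. PerfectClosure k p). Consider the field of formal Laurent series k((u)) embedded coefficientwise into k'((u)). If an element x of k'((u)) is algebraic over k((u)) and its minimal polynomial over k((u)) is separable, then x lies in (the image of) k((u)). -/

import Mathlib

/-- The coefficientwise ring homomorphism `k((u)) → k'((u))` induced by `f : k →+* k'`. -/
noncomputable def LaurentSeries.mapRingHom {k k' : Type*} [CommRing k] [CommRing k']
    (f : k →+* k') : LaurentSeries k →+* LaurentSeries k' where
  toFun x := x.map f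
  map_one' := HahnSeries.map_one f.toMonoidWithZeroHom
  map_mul' x y := HahnSeries.map_mul (f : k →ₙ+* k')
  map_zero' := HahnSeries.map_zero (f : ZeroHom k k')
  map_add' x y := HahnSeries.map_add (f : k →+ k')


open Polynomial PowerSeries

/-- Newton step for strong Hensel in a power series ring over a field. -/
private lemma hensel_step {S : Type*} [Field S] (F : Polynomial S⟦X⟧) (y : S⟦X⟧) (c : ℕ)
    (e : S⟦X⟧) (he : F.derivative.eval y = (PowerSeries.X : S⟦X⟧) ^ c * e)
    (hec : constantCoeff e ≠ 0)
    (j : ℕ) (hj : 1 ≤ j) (z : S⟦X⟧)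
    (hz : (PowerSeries.X : S⟦X⟧) ^ (2*c+j) ∣ F.eval z) (hzy : (PowerSeries.X : S⟦X⟧) ^ (c+1) ∣ z - y) :
    ∃ z', ((PowerSeries.X : S⟦X⟧) ^ (2*c+2*j) ∣ F.eval z') ∧ ((PowerSeries.X : S⟦X⟧) ^ (c+j) ∣ z' - z)
      ∧ ((PowerSeries.X : S⟦X⟧) ^ (c+1) ∣ z' - y) := by
  have hdy : (PowerSeries.X : S⟦X⟧) ^ (c+1) ∣ F.derivative.eval z - F.derivative.eval y :=
    dvd_trans hzy (Polynomial.sub_dvd_eval_sub z y F.derivative)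
  obtain ⟨w, hw⟩ := hdy
  have hdz : F.derivative.eval z = (PowerSeries.X : S⟦X⟧) ^ c * (e + PowerSeries.X * w) := by
    have h2 : F.derivative.eval z
        = (PowerSeries.X : S⟦X⟧) ^ c * e + (PowerSeries.X : S⟦X⟧) ^ (c+1) * w := by
      rw [← he, ← hw]; ring
    rw [h2, pow_succ]; ring
  have hunit : IsUnit (e + PowerSeries.X * w) := by
    rw [PowerSeries.isUnit_iff_constantCoeff]
    simpa using Ne.isUnit hec
  obtain ⟨a, ha⟩ := hz
  obtain ⟨U, hU⟩ := hunit
  set δ : S⟦X⟧ := -((PowerSeries.X : S⟦X⟧) ^ (c+j) * a * ↑U⁻¹) with hδ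
  obtain ⟨q, hq⟩ := F.binomExpansion z δ
  have hcancel : F.eval z + F.derivative.eval z * δ = 0 := by
    rw [ha, hdz, hδ, ← hU]
    have : ((U : S⟦X⟧) * ↑U⁻¹) = 1 := U.mul_inv
    calc (PowerSeries.X : S⟦X⟧) ^ (2*c+j) * a + (X:S⟦X⟧)^c * ↑U * -((X:S⟦X⟧)^(c+j) * a * ↑U⁻¹)
        = (PowerSeries.X : S⟦X⟧) ^ (2*c+j) * a - ((X:S⟦X⟧)^c * (X:S⟦X⟧)^(c+j)) * a * (↑U * ↑U⁻¹) := by ring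
      _ = 0 := by rw [this, ← pow_add, show c + (c+j) = 2*c+j by ring]; ring
  refine ⟨z + δ, ?_, ?_, ?_⟩
  · rw [hq, hcancel, zero_add]
    have hdd : (PowerSeries.X : S⟦X⟧) ^ (c+j) ∣ δ := by
      rw [hδ]; exact dvd_neg.mpr ((dvd_mul_right _ _).mul_right _)
    have h2 : (PowerSeries.X : S⟦X⟧) ^ (2*c+2*j) ∣ δ ^ 2 := by
      have := mul_dvd_mul hdd hdd
      rwa [← pow_add, show c+j+(c+j) = 2*c+2*j by ring, ← sq] at this
    exact (h2.mul_left q)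
  · have hdd : (PowerSeries.X : S⟦X⟧) ^ (c+j) ∣ δ := by
      rw [hδ]; exact dvd_neg.mpr ((dvd_mul_right _ _).mul_right _)
    simpa [add_sub_cancel_left] using hdd
  · have hδy : (PowerSeries.X : S⟦X⟧) ^ (c+1) ∣ δ := by
      have : (PowerSeries.X : S⟦X⟧) ^ (c+j) ∣ δ := by
        rw [hδ]; exact dvd_neg.mpr ((dvd_mul_right _ _).mul_right _)
      exact dvd_trans (pow_dvd_pow _ (by omega)) this
    have : z + δ - y = (z - y) + δ := by ring
    rw [this]
    exact dvd_add hzy hδy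

/-- Strong Hensel's lemma in `S⟦X⟧`: a simple-enough approximate root yields a true root. -/
private lemma hensel_root {S : Type*} [Field S] (F : Polynomial S⟦X⟧) (y : S⟦X⟧) (c : ℕ)
    (h0 : (PowerSeries.X : S⟦X⟧) ^ (2*c+1) ∣ F.eval y)
    (h1 : (PowerSeries.X : S⟦X⟧) ^ c ∣ F.derivative.eval y)
    (h2 : ¬ (PowerSeries.X : S⟦X⟧) ^ (c+1) ∣ F.derivative.eval y) :
    ∃ z : S⟦X⟧, F.eval z = 0 := by
  obtain ⟨e, he⟩ := h1
  have hec : constantCoeff e ≠ 0 := by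
    intro h
    exact h2 (by rw [he, pow_succ]; exact mul_dvd_mul_left _ (PowerSeries.X_dvd_iff.mpr h))
  -- the inductive type of approximations
  let T : ℕ → Type _ := fun m => {z : S⟦X⟧ //
    ((PowerSeries.X : S⟦X⟧) ^ (2*c+2^m) ∣ F.eval z) ∧ ((PowerSeries.X : S⟦X⟧) ^ (c+1) ∣ z - y)}
  have step'' : ∀ m : ℕ, (wz : T m) → {w' : T (m+1) // (PowerSeries.X : S⟦X⟧) ^ (c+2^m) ∣ w'.1 - wz.1} := by
    intro m wz
    have h := hensel_step F y c e he hec (2^m) (Nat.one_le_two_pow) wz.1 wz.2.1 wz.2.2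
    choose z' hz1 hz2 hz3 using h
    exact ⟨⟨z', by rwa [show 2*c+2^(m+1) = 2*c+2*2^m by rw [pow_succ]; ring], hz3⟩, hz2⟩
  let Z : ∀ m : ℕ, T m := fun m => Nat.rec
    ⟨y, by simpa using h0, by simp⟩ (fun m w => (step'' m w).1) m
  have hZ : ∀ m, (PowerSeries.X : S⟦X⟧) ^ (c+2^m) ∣ (Z (m+1)).1 - (Z m).1 := fun m => (step'' m (Z m)).2
  -- coefficients stabilize
  have stab : ∀ (jj : ℕ) (m m' : ℕ), m ≤ m' → (jj : ℕ) < c + 2^m →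
      PowerSeries.coeff jj (Z m').1 = PowerSeries.coeff jj (Z m).1 := by
    intro jj m m' hmm' hcm
    induction m' with
    | zero => cases Nat.le_zero.mp hmm'; rfl
    | succ n ih =>
      rcases Nat.lt_or_ge m (n+1) with h | h
      · have hn : m ≤ n := by omega
        have h1 := ih hn
        have h2 : PowerSeries.coeff jj ((Z (n+1)).1 - (Z n).1) = 0 := by
          refine (PowerSeries.X_pow_dvd_iff.mp (hZ n)) jj ?_
          have : (2:ℕ)^m ≤ 2^n := Nat.pow_le_pow_right (by norm_num) hn
          omega
        rw [map_sub, sub_eq_zero] at h2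
        rw [h2, h1]
      · have : m = n + 1 := by omega
        subst this; rfl
  -- the limit
  set z : S⟦X⟧ := PowerSeries.mk (fun jj => PowerSeries.coeff jj (Z jj).1) with hzdef
  have hlim : ∀ m, (PowerSeries.X : S⟦X⟧) ^ (c+2^m) ∣ z - (Z m).1 := by
    intro m
    rw [PowerSeries.X_pow_dvd_iff]
    intro jj hjj
    have h1 : PowerSeries.coeff jj z = PowerSeries.coeff jj (Z (max jj m)).1 := by
      rw [hzdef, PowerSeries.coeff_mk]
      exact (stab jj jj (max jj m) (le_max_left _ _)
        (by have := Nat.lt_two_pow_self (n := jj); omega)).symm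
    have h2 : PowerSeries.coeff jj (Z (max jj m)).1 = PowerSeries.coeff jj (Z m).1 :=
      stab jj m (max jj m) (le_max_right _ _) hjj
    rw [map_sub, h1, h2, sub_self]
  refine ⟨z, ?_⟩
  have key : ∀ m : ℕ, (PowerSeries.X : S⟦X⟧) ^ (c+2^m) ∣ F.eval z := by
    intro m
    have hd : z - (Z m).1 ∣ F.eval z - F.eval (Z m).1 := Polynomial.sub_dvd_eval_sub _ _ _
    have h1 : (PowerSeries.X : S⟦X⟧) ^ (c+2^m) ∣ F.eval z - F.eval (Z m).1 := dvd_trans (hlim m) hd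
    have h2 : (PowerSeries.X : S⟦X⟧) ^ (c+2^m) ∣ F.eval (Z m).1 :=
      dvd_trans (pow_dvd_pow _ (by omega)) (Z m).2.1
    simpa using dvd_add h1 h2
  ext jj
  rw [map_zero]
  have := key jj
  rw [PowerSeries.X_pow_dvd_iff] at this
  exact this jj (by have := Nat.lt_two_pow_self (n := jj); omega)



private lemma ps_coeff_pow_p {A : Type*} [CommRing A] (p : ℕ) (hp : p.Prime) [CharP A p]
    (w : A⟦X⟧) (m : ℕ) :
    PowerSeries.coeff m (w ^ p) =
      if p ∣ m then (PowerSeries.coeff (m / p) w) ^ p else 0 := by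
  haveI : Fact p.Prime := ⟨hp⟩
  haveI : CharP A⟦X⟧ p :=
    charP_of_injective_ringHom (f := (PowerSeries.C : A →+* A⟦X⟧)) PowerSeries.C_injective p
  set P : Polynomial A := trunc (m+1) w with hP
  have hdvd : (PowerSeries.X : A⟦X⟧) ^ (m+1) ∣ (w - ↑P) := by
    rw [PowerSeries.X_pow_dvd_iff]
    intro j hj
    rw [map_sub, Polynomial.coeff_coe, hP, coeff_trunc, if_pos hj, sub_self]
  have hsplit : w ^ p = (w - ↑P) ^ p + (↑P : A⟦X⟧) ^ p := by
    rw [← add_pow_char]; ring_nf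
  have hzero : PowerSeries.coeff m ((w - (↑P : A⟦X⟧)) ^ p) = 0 := by
    have h1 : (PowerSeries.X : A⟦X⟧) ^ (m+1) ∣ (w - ↑P) ^ p :=
      dvd_trans hdvd (dvd_pow_self _ hp.ne_zero)
    exact (PowerSeries.X_pow_dvd_iff.mp h1) m (by omega)
  have hPp : ((↑P : A⟦X⟧) ^ p) = ((P ^ p : Polynomial A) : A⟦X⟧) := by
    push_cast; ring
  rw [hsplit, map_add, hzero, zero_add, hPp, Polynomial.coeff_coe]
  rw [← Polynomial.map_frobenius_expand, Polynomial.coeff_map, Polynomial.coeff_expand hp.pos]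
  split_ifs with h
  · rw [frobenius_def, hP, coeff_trunc, if_pos (by have := Nat.div_le_self m p; omega)]
  · exact map_zero (frobenius A p)

private lemma ps_coeff_pow_p_pow {A : Type*} [CommRing A] (p : ℕ) (hp : p.Prime) [CharP A p]
    (w : A⟦X⟧) (n m : ℕ) :
    (∃ j, PowerSeries.coeff m (w ^ p ^ n) = (PowerSeries.coeff j w) ^ p ^ n) ∨
      PowerSeries.coeff m (w ^ p ^ n) = 0 := by
  induction n generalizing m with
  | zero => exact Or.inl ⟨m, by simp⟩
  | succ n ih =>
    have hw : w ^ p ^ (n+1) = (w ^ p ^ n) ^ p := by rw [← pow_mul, pow_succ]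
    rw [hw, ps_coeff_pow_p p hp]
    split_ifs with h
    · rcases ih (m / p) with ⟨j, hj⟩ | h0
      · exact Or.inl ⟨j, by rw [hj, ← pow_mul, ← pow_succ]⟩
      · exact Or.inr (by rw [h0, zero_pow hp.ne_zero])
    · exact Or.inr rfl

private lemma laurent_coeff_nonneg_of_ofPS {R : Type*} [Semiring R] (v : R⟦X⟧) (g : ℤ)
    (hg : g < 0) : (HahnSeries.ofPowerSeries ℤ R v).coeff g = 0 := by
  rw [HahnSeries.ofPowerSeries_apply, HahnSeries.embDomain_of_notMem_range]
  rintro ⟨n, hn⟩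
  simp only [Nat.castOrderEmbedding_apply] at hn
  omega

private lemma laurent_coeff_ofPS {R : Type*} [Semiring R] (v : R⟦X⟧) (g : ℤ) (hg : 0 ≤ g) :
    (HahnSeries.ofPowerSeries ℤ R v).coeff g = PowerSeries.coeff g.toNat v := by
  have h1 : ((g.toNat : ℕ) : ℤ) = g := Int.toNat_of_nonneg hg
  rw [← h1, HahnSeries.ofPowerSeries_apply_coeff, Int.toNat_natCast]

private lemma mem_ofPS_range {R : Type*} [Semiring R] (w : LaurentSeries R)
    (h : ∀ g : ℤ, g < 0 → w.coeff g = 0) :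
    ∃ v : R⟦X⟧, HahnSeries.ofPowerSeries ℤ R v = w := by
  refine ⟨PowerSeries.mk fun n => w.coeff (n : ℤ), ?_⟩
  ext g
  rcases lt_or_ge g 0 with hg | hg
  · rw [laurent_coeff_nonneg_of_ofPS _ _ hg, h g hg]
  · rw [laurent_coeff_ofPS _ _ hg, PowerSeries.coeff_mk, Int.toNat_of_nonneg hg]

private lemma ps_mem_map_range {R S : Type*} [Semiring R] [Semiring S] (φ : R →+* S)
    (w : S⟦X⟧) (h : ∀ m : ℕ, PowerSeries.coeff m w ∈ Set.range φ) :
    ∃ v : R⟦X⟧, PowerSeries.map φ v = w := by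
  refine ⟨PowerSeries.mk fun m => (h m).choose, ?_⟩
  ext m
  rw [PowerSeries.coeff_map, PowerSeries.coeff_mk, (h m).choose_spec]

private lemma order_bound {R : Type*} [Semiring R] (w : LaurentSeries R) :
    ∃ m : ℕ, ∀ g : ℤ, g < -(m : ℤ) → w.coeff g = 0 := by
  refine ⟨(-w.order).toNat, fun g hg => ?_⟩
  apply HahnSeries.coeff_eq_zero_of_lt_order
  have h1 : -w.order ≤ ((-w.order).toNat : ℤ) := Int.self_le_toNat _
  omega



private lemma pow_mem_range_mono {k k' : Type*} [Field k] [Field k'] [Algebra k k']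
    (p : ℕ) (a : k') {m n : ℕ} (hmn : m ≤ n) (h : a ^ p ^ m ∈ (algebraMap k k').range) :
    a ^ p ^ n ∈ (algebraMap k k').range := by
  obtain ⟨b, hb⟩ := h
  exact ⟨b ^ p ^ (n - m), by
    rw [map_pow, hb, ← pow_mul, ← pow_add, Nat.add_sub_cancel' hmn]⟩

/-- The subfield of `k'` of elements `a` with `a ^ p ^ n ∈ k`. -/
private def insepSubfield (p : ℕ) (hp : p.Prime) (k k' : Type*) [Field k] [Field k']
    [Algebra k k'] [ExpChar k' p] (n : ℕ) : Subfield k' where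
  carrier := {a : k' | a ^ p ^ n ∈ (algebraMap k k').range}
  mul_mem' := fun {a b} ha hb => by
    simp only [Set.mem_setOf_eq, mul_pow] at *
    exact mul_mem ha hb
  one_mem' := by simp only [Set.mem_setOf_eq, one_pow]; exact one_mem _
  add_mem' := fun {a b} ha hb => by
    simp only [Set.mem_setOf_eq, add_pow_expChar_pow] at *
    exact add_mem ha hb
  zero_mem' := by
    simp only [Set.mem_setOf_eq, zero_pow (pow_ne_zero n hp.ne_zero)]
    exact zero_mem _
  neg_mem' := fun {a} ha => by
    simp only [Set.mem_setOf_eq] at *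
    rw [show -a = 0 - a by ring, sub_pow_expChar_pow, zero_pow (pow_ne_zero n hp.ne_zero),
      zero_sub]
    exact neg_mem ha
  inv_mem' := fun a ha => by
    simp only [Set.mem_setOf_eq, inv_pow] at *
    obtain ⟨b, hb⟩ := ha
    exact ⟨b⁻¹, by rw [map_inv₀, hb]⟩

private lemma mem_insepSubfield_iff {p : ℕ} {hp : p.Prime} {k k' : Type*} [Field k] [Field k']
    [Algebra k k'] [ExpChar k' p] {n : ℕ} {a : k'} :
    a ∈ insepSubfield p hp k k' n ↔ a ^ p ^ n ∈ (algebraMap k k').range := Iff.rfl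

private lemma algebraMap_mem_insepSubfield {p : ℕ} {hp : p.Prime} {k k' : Type*} [Field k]
    [Field k'] [Algebra k k'] [ExpChar k' p] {n : ℕ} (b : k) :
    algebraMap k k' b ∈ insepSubfield p hp k k' n :=
  ⟨b ^ p ^ n, by rw [map_pow]⟩

/-- The inclusion of `k` into the subfield. -/
private def insepInclusion (p : ℕ) (hp : p.Prime) (k k' : Type*) [Field k] [Field k']
    [Algebra k k'] [ExpChar k' p] (n : ℕ) : k →+* (insepSubfield p hp k k' n) where
  toFun b := ⟨algebraMap k k' b, algebraMap_mem_insepSubfield b⟩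
  map_one' := by ext; simp
  map_mul' a b := by ext; simp
  map_zero' := by ext; simp
  map_add' a b := by ext; simp

private lemma insepSubtype_comp (p : ℕ) (hp : p.Prime) (k k' : Type*) [Field k] [Field k']
    [Algebra k k'] [ExpChar k' p] (n : ℕ) :
    (insepSubfield p hp k k' n).subtype.comp (insepInclusion p hp k k' n) =
      algebraMap k k' := rfl



private lemma eval₂_id' {R : Type*} [CommSemiring R] (q : Polynomial R) (t : R) :
    q.eval₂ (RingHom.id R) t = q.eval t := by
  rw [← Polynomial.eval_map, Polynomial.map_id]

private lemma ps_map_injective {R S : Type*} [Semiring R] [Semiring S] (φ : R →+* S)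
    (hφ : Function.Injective φ) : Function.Injective (PowerSeries.map φ) := by
  intro a b hab
  ext m
  apply hφ
  rw [← PowerSeries.coeff_map, ← PowerSeries.coeff_map, hab]


set_option maxHeartbeats 2000000 in
/-- Lemma 3.12(3) of the paper: if `k'` is a perfect closure of a field `k` of
characteristic `p`, then any element of `k'((u))` which is algebraic with separable minimal
polynomial over the coefficientwise-embedded subfield `k((u))` already lies in `k((u))`. -/
theorem stmt_2 (p : ℕ) (hp : p.Prime)
    (k : Type*) [Field k] [CharP k p]
    (k' : Type*) [Field k'] [CharP k' p] [ExpChar k' p] [PerfectRing k' p]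
    [Algebra k k'] [IsPurelyInseparable k k']
    (x : LaurentSeries k')
    (halg : @IsAlgebraic (LaurentSeries k) (LaurentSeries k') _ _
      (LaurentSeries.mapRingHom (algebraMap k k')).toAlgebra x)
    (hsep : (@minpoly (LaurentSeries k) (LaurentSeries k') _ _
      (LaurentSeries.mapRingHom (algebraMap k k')).toAlgebra x).Separable) :
    x ∈ (LaurentSeries.mapRingHom (algebraMap k k')).range := by
  classical
  letI : Algebra (LaurentSeries k) (LaurentSeries k') :=
    (LaurentSeries.mapRingHom (algebraMap k k')).toAlgebra
  haveI : Fact p.Prime := ⟨hp⟩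
  set α : LaurentSeries k →+* LaurentSeries k' := LaurentSeries.mapRingHom (algebraMap k k')
    with hαdef
  haveI charK' : CharP (LaurentSeries k') p :=
    charP_of_injective_ringHom (f := (HahnSeries.C : k' →+* (LaurentSeries k'))) HahnSeries.C_injective p
  haveI charPoly : CharP (Polynomial (LaurentSeries k')) p :=
    charP_of_injective_ringHom (f := (Polynomial.C : (LaurentSeries k') →+* Polynomial (LaurentSeries k')))
      Polynomial.C_injective p
  haveI charPS : CharP (PowerSeries k') p :=
    charP_of_injective_ringHom (f := (PowerSeries.C)) PowerSeries.C_injective p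
  have hint : IsIntegral (LaurentSeries k) x := halg.isIntegral
  set f := minpoly (LaurentSeries k) x with hfdef
  have hmonic : f.Monic := minpoly.monic hint
  have hirr : Irreducible f := minpoly.irreducible hint
  have hd1 : 0 < f.natDegree := minpoly.natDegree_pos hint
  have hfaev : Polynomial.aeval x f = 0 := minpoly.aeval (LaurentSeries k) x
  clear_value f
  suffices hroot : ∃ (n : ℕ) (r : (LaurentSeries k')) (σ : (LaurentSeries k)), Polynomial.aeval r f = 0 ∧ α σ = r ^ p ^ n by
    -- ===================== endgame =====================
    obtain ⟨n, r, σ, hr, hσ⟩ := hroot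
    have hfr : minpoly (LaurentSeries k) r = f :=
      (minpoly.eq_of_irreducible_of_monic hirr hr hmonic).symm
    have hdvd : f ∣ (Polynomial.X ^ p ^ n - Polynomial.C σ) := by
      rw [← hfr]
      refine minpoly.dvd _ _ ?_
      rw [map_sub, map_pow, Polynomial.aeval_X, Polynomial.aeval_C]
      rw [show (algebraMap (LaurentSeries k) (LaurentSeries k')) σ = α σ from rfl, hσ, sub_self]
    have hmdvd : f.map α ∣ (Polynomial.X - Polynomial.C r) ^ p ^ n := by
      have h2 := map_dvd (Polynomial.mapRingHom α) hdvd
      simp only [Polynomial.coe_mapRingHom, Polynomial.map_sub, Polynomial.map_pow,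
        Polynomial.map_X, Polynomial.map_C] at h2
      rw [hσ] at h2
      have h4 : (Polynomial.X - Polynomial.C r) ^ p ^ n
          = Polynomial.X ^ p ^ n - Polynomial.C (r ^ p ^ n) := by
        have h5 := sub_pow_char_pow (x := (Polynomial.X : (Polynomial (LaurentSeries k'))))
          (y := Polynomial.C r) (p := p) (n := n)
        rw [h5, map_pow]
      rwa [← h4] at h2
    obtain ⟨i, hi, hassoc⟩ := (dvd_prime_pow (Polynomial.prime_X_sub_C r) _).mp hmdvd
    have heq : f.map α = (Polynomial.X - Polynomial.C r) ^ i :=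
      Polynomial.eq_of_monic_of_associated (hmonic.map α)
        ((Polynomial.monic_X_sub_C r).pow _) hassoc
    have hdegi : f.natDegree = i := by
      have h3 : (f.map α).natDegree = f.natDegree := Polynomial.natDegree_map α
      rw [heq] at h3
      rw [← h3, Polynomial.natDegree_pow, Polynomial.natDegree_X_sub_C, mul_one]
    have hile : i ≤ 1 := by
      by_contra hgt
      have hsq : Squarefree (f.map α) := (hsep.map (f := α)).squarefree
      refine Polynomial.not_isUnit_X_sub_C r (hsq (Polynomial.X - Polynomial.C r) ?_)
      have h5 : (Polynomial.X - Polynomial.C r) ^ i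
          = ((Polynomial.X - Polynomial.C r) * (Polynomial.X - Polynomial.C r))
            * (Polynomial.X - Polynomial.C r) ^ (i - 2) := by
        rw [← sq, ← pow_add]
        congr 1
        omega
      exact ⟨_, by rw [heq, h5]⟩
    have hdone : f.natDegree = 1 := by omega
    rw [hfdef] at hdone
    exact minpoly.natDegree_eq_one_iff.mp hdone
  -- ===================== construction =====================
  by_cases hx0 : x = 0
  · refine ⟨0, x, 0, hfaev, ?_⟩
    rw [hx0, map_zero, pow_zero, pow_one]
  set fbar : Polynomial (LaurentSeries k') := f.map α with hfbardef
  have hdeg : fbar.natDegree = f.natDegree := Polynomial.natDegree_map α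
  set d := f.natDegree with hddef
  have hfx : fbar.eval x = 0 := by
    have h := hfaev
    rw [Polynomial.aeval_def, ← Polynomial.eval_map] at h
    exact h
  have hsepbar : fbar.Separable := hsep.map (f := α)
  have hder_ne : fbar.derivative.eval x ≠ 0 := by
    obtain ⟨A, B, hAB⟩ := hsepbar
    intro h0
    have h1 := congrArg (Polynomial.eval x) hAB
    simp only [Polynomial.eval_add, Polynomial.eval_mul, Polynomial.eval_one, hfx, h0,
      mul_zero, add_zero, zero_add] at h1
    exact one_ne_zero h1.symm
  obtain ⟨Nx, hNx⟩ := order_bound x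
  choose Nc hNc using fun i : ℕ => order_bound (fbar.coeff i)
  set N : ℕ := (Finset.range (d+1)).sup Nc + Nx + 1 with hNdef
  have hNval : (N:ℤ) = (((Finset.range (d+1)).sup Nc : ℕ):ℤ) + (Nx:ℤ) + 1 := by
    rw [hNdef]; push_cast; ring
  set s : (LaurentSeries k') := HahnSeries.single (N:ℤ) 1 with hsdef
  have hs0 : s ≠ 0 := HahnSeries.single_ne_zero one_ne_zero
  set Z : (LaurentSeries k') := s * x with hZdef
  have hZcoeff : ∀ g : ℤ, Z.coeff g = x.coeff (g - N) := by
    intro g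
    have h := HahnSeries.coeff_single_mul_add (r := (1:k')) (x := x) (a := g - N) (b := (N:ℤ))
    rw [show (g - N) + (N:ℤ) = g by ring, one_mul] at h
    exact h
  have hZneg : ∀ g : ℤ, g < 0 → Z.coeff g = 0 := fun g hg => by
    rw [hZcoeff]; exact hNx _ (by omega)
  obtain ⟨x₂, hx₂⟩ := mem_ofPS_range Z hZneg
  set Wbar : Polynomial (LaurentSeries k') := fbar.scaleRoots s with hWdef
  have hWZ : Wbar.eval Z = 0 := by
    have h := Polynomial.scaleRoots_eval₂_mul (p := fbar) (RingHom.id (LaurentSeries k')) x s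
    simp only [RingHom.id_apply, eval₂_id'] at h
    rw [hfx, mul_zero] at h
    exact h
  haveI : Infinite (LaurentSeries k') := Infinite.of_injective
    (fun m : ℕ => (HahnSeries.single (m:ℤ) 1 : (LaurentSeries k'))) (by
      intro a b hab
      by_contra hne
      have h1 : ((HahnSeries.single ((a:ℤ)) 1 : LaurentSeries k')).coeff (a:ℤ) = 1 :=
        HahnSeries.coeff_single_same _ _
      have h2 : ((HahnSeries.single ((b:ℤ)) 1 : LaurentSeries k')).coeff (a:ℤ) = 0 :=
        HahnSeries.coeff_single_of_ne (fun hh => hne (by exact_mod_cast hh))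
      have hab' : (HahnSeries.single ((a:ℤ)) (1:k') : LaurentSeries k')
          = HahnSeries.single ((b:ℤ)) 1 := hab
      rw [hab', h2] at h1
      exact one_ne_zero h1.symm)
  have hcompeq : Wbar = Polynomial.C (s^d) * (fbar.comp (Polynomial.C s⁻¹ * Polynomial.X)) := by
    apply Polynomial.funext
    intro T
    rw [Polynomial.eval_mul, Polynomial.eval_C, Polynomial.eval_comp, Polynomial.eval_mul,
      Polynomial.eval_C, Polynomial.eval_X]
    have h := Polynomial.scaleRoots_eval₂_mul (p := fbar) (RingHom.id (LaurentSeries k')) (s⁻¹ * T) s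
    simp only [RingHom.id_apply, eval₂_id'] at h
    rw [← mul_assoc, mul_inv_cancel₀ hs0, one_mul] at h
    rw [hdeg] at h
    exact h
  have hWder : Wbar.derivative.eval Z = s^(d-1) * fbar.derivative.eval x := by
    rw [hcompeq]
    simp only [Polynomial.derivative_C_mul, Polynomial.derivative_comp,
      Polynomial.derivative_X, mul_one, Polynomial.eval_mul, Polynomial.eval_C,
      Polynomial.eval_comp, Polynomial.eval_X]
    rw [hZdef, ← mul_assoc s⁻¹ s x, inv_mul_cancel₀ hs0, one_mul]
    have h6 : s ^ d = s ^ (d-1) * s := by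
      rw [← pow_succ]
      congr 1
      omega
    rw [h6, mul_assoc, ← mul_assoc s s⁻¹, mul_inv_cancel₀ hs0, one_mul]
  have hWder_ne : Wbar.derivative.eval Z ≠ 0 := by
    rw [hWder]; exact mul_ne_zero (pow_ne_zero _ hs0) hder_ne
  have hWco : ∀ (i : ℕ) (g : ℤ), (Wbar.coeff i).coeff g
      = (fbar.coeff i).coeff (g - ((fbar.natDegree - i : ℕ):ℤ) * (N:ℤ)) := by
    intro i g
    rw [hWdef, Polynomial.coeff_scaleRoots]
    rw [hsdef, HahnSeries.single_pow, one_pow, nsmul_eq_mul]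
    have h := HahnSeries.coeff_mul_single_add (r := (1:k')) (x := fbar.coeff i)
        (b := ((fbar.natDegree - i : ℕ):ℤ) * (N:ℤ))
        (a := g - ((fbar.natDegree - i : ℕ):ℤ) * (N:ℤ))
    rw [mul_one, show (g - ((fbar.natDegree - i : ℕ):ℤ) * (N:ℤ))
        + ((fbar.natDegree - i : ℕ):ℤ) * (N:ℤ) = g by ring] at h
    exact h
  have hWnonneg : ∀ (i : ℕ) (g : ℤ), g < 0 → (Wbar.coeff i).coeff g = 0 := by
    intro i g hg
    rw [hWco]
    rcases lt_trichotomy i d with hid | hid | hid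
    · apply hNc i
      have h1 : (1:ℤ) ≤ ((fbar.natDegree - i : ℕ):ℤ) := by rw [hdeg]; push_cast; omega
      have h3 : (N:ℤ) ≤ ((fbar.natDegree - i : ℕ):ℤ) * (N:ℤ) :=
        le_mul_of_one_le_left (by positivity) h1
      have h2 : ((Nc i : ℕ):ℤ) ≤ (((Finset.range (d+1)).sup Nc : ℕ):ℤ) := by
        exact_mod_cast Finset.le_sup (Finset.mem_range.mpr (by omega))
      linarith
    · have h7 : fbar.coeff i = 1 := by
        have h8 := (hmonic.map α).coeff_natDegree
        rwa [hdeg, ← hid] at h8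
      rw [h7]
      have h9 : ((fbar.natDegree - i : ℕ):ℤ) = 0 := by rw [hdeg, hid]; simp
      rw [h9, zero_mul, sub_zero, HahnSeries.coeff_one, if_neg (by omega)]
    · have hco : fbar.coeff i = 0 :=
        Polynomial.coeff_eq_zero_of_natDegree_lt (by rw [hdeg]; omega)
      rw [hco]
      simp
  have hWrange : ∀ (i : ℕ) (g : ℤ), (Wbar.coeff i).coeff g ∈ Set.range (algebraMap k k') := by
    intro i g
    rw [hWco, hfbardef, Polynomial.coeff_map]
    exact ⟨HahnSeries.coeff (f.coeff i) _, rfl⟩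
  set ofPS : PowerSeries k' →+* (LaurentSeries k') := HahnSeries.ofPowerSeries ℤ k' with hofPS
  have hWlift : ∀ i, Wbar.coeff i ∈ Set.range ofPS := fun i =>
    mem_ofPS_range (Wbar.coeff i) (hWnonneg i)
  obtain ⟨Hpoly, hHW⟩ := (Polynomial.mem_lifts _).mp
    ((Polynomial.lifts_iff_coeff_lifts Wbar).mpr hWlift)
  have hinj : Function.Injective ofPS := HahnSeries.ofPowerSeries_injective
  have evalpush : ∀ (q : Polynomial (PowerSeries k')) (t : PowerSeries k'),
      ofPS (q.eval t) = (q.map ofPS).eval (ofPS t) := by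
    intro q t; rw [Polynomial.eval_map, Polynomial.eval₂_hom]
  have hHx₂ : Hpoly.eval x₂ = 0 := by
    apply hinj
    rw [evalpush, hx₂, hHW, hWZ, map_zero]
  set D₀ : PowerSeries k' := Hpoly.derivative.eval x₂ with hD₀
  have hDW : ofPS D₀ = Wbar.derivative.eval Z := by
    have h := evalpush Hpoly.derivative x₂
    rwa [← Polynomial.derivative_map, hHW, hx₂] at h
  have hD₀ne : D₀ ≠ 0 := by
    intro h0
    rw [h0, map_zero] at hDW
    exact hWder_ne hDW.symm
  have hex : ∃ c : ℕ, PowerSeries.coeff c D₀ ≠ 0 := by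
    by_contra hno
    push_neg at hno
    exact hD₀ne (PowerSeries.ext fun m => by rw [hno m, map_zero])
  set c := Nat.find hex with hc
  have hcne : PowerSeries.coeff c D₀ ≠ 0 := Nat.find_spec hex
  have hclt : ∀ j, j < c → PowerSeries.coeff j D₀ = 0 := by
    intro j hj
    by_contra h
    exact Nat.find_min hex hj h
  set M := 2*c+1 with hM
  have hpure : ∀ j : ℕ, ∃ nj : ℕ,
      (PowerSeries.coeff j x₂) ^ p ^ nj ∈ (algebraMap k k').range :=
    fun j => IsPurelyInseparable.pow_mem k p _
  choose nf hnf using hpure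
  set n := (Finset.range M).sup nf with hn
  set kn := insepSubfield p hp k k' n with hkn
  set ι : kn →+* k' := (insepSubfield p hp k k' n).subtype with hι
  have hιinj : Function.Injective ι := ι.injective
  have hx₂mem : ∀ j : ℕ, j < M → PowerSeries.coeff j x₂ ∈ kn := fun j hj =>
    pow_mem_range_mono p _ (Finset.le_sup (Finset.mem_range.mpr hj)) (hnf j)
  have hrangemem : ∀ a : k', a ∈ Set.range (algebraMap k k') → a ∈ kn := by
    rintro a ⟨b, rfl⟩
    exact algebraMap_mem_insepSubfield b
  have hHcoeff : ∀ (i m : ℕ), PowerSeries.coeff m (Hpoly.coeff i)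
      = (Wbar.coeff i).coeff (m : ℤ) := by
    intro i m
    have h1 : ofPS (Hpoly.coeff i) = Wbar.coeff i := by
      rw [← hHW, Polynomial.coeff_map]
    rw [← h1, hofPS, laurent_coeff_ofPS _ _ (by positivity), Int.toNat_natCast]
  have hHlift : ∀ i, Hpoly.coeff i ∈ Set.range (PowerSeries.map ι) := by
    intro i
    apply ps_mem_map_range
    intro m
    have h2 : PowerSeries.coeff m (Hpoly.coeff i) ∈ kn := by
      rw [hHcoeff]
      exact hrangemem _ (hWrange i m)
    exact ⟨⟨_, h2⟩, rfl⟩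
  obtain ⟨G, hGH⟩ := (Polynomial.mem_lifts _).mp
    ((Polynomial.lifts_iff_coeff_lifts Hpoly).mpr hHlift)
  set y₀ : PowerSeries kn :=
    PowerSeries.mk (fun j => if h : j < M then ⟨_, hx₂mem j h⟩ else 0) with hy₀
  set y₁ := PowerSeries.map ι y₀ with hy₁
  have hy₁coeff : ∀ j : ℕ, PowerSeries.coeff j y₁
      = if j < M then PowerSeries.coeff j x₂ else 0 := by
    intro j
    rw [hy₁, PowerSeries.coeff_map, hy₀, PowerSeries.coeff_mk]
    split_ifs with h
    · rfl
    · exact map_zero ι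
  have hyx : (PowerSeries.X : PowerSeries k') ^ M ∣ y₁ - x₂ := by
    rw [PowerSeries.X_pow_dvd_iff]
    intro j hj
    rw [map_sub, hy₁coeff, if_pos hj, sub_self]
  have evalpush2 : ∀ (q : Polynomial (PowerSeries kn)) (t : PowerSeries kn),
      PowerSeries.map ι (q.eval t) = (q.map (PowerSeries.map ι)).eval (PowerSeries.map ι t) := by
    intro q t; rw [Polynomial.eval_map, Polynomial.eval₂_hom]
  have hGy0 : (PowerSeries.X : PowerSeries kn) ^ (2*c+1) ∣ G.eval y₀ := by
    rw [PowerSeries.X_pow_dvd_iff]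
    intro j hj
    have h1 : PowerSeries.coeff j (Hpoly.eval y₁) = 0 := by
      have hdvd2 : (PowerSeries.X : PowerSeries k') ^ M ∣ Hpoly.eval y₁ := by
        have h3 := dvd_trans hyx (Polynomial.sub_dvd_eval_sub y₁ x₂ Hpoly)
        rwa [hHx₂, sub_zero] at h3
      exact PowerSeries.X_pow_dvd_iff.mp hdvd2 j (by omega)
    have h2 : PowerSeries.map ι (G.eval y₀) = Hpoly.eval y₁ := by rw [evalpush2, hGH, hy₁]
    apply hιinj
    rw [← PowerSeries.coeff_map, h2, h1, map_zero]
  have hD₁ : ∀ j : ℕ, j ≤ c → PowerSeries.coeff j (Hpoly.derivative.eval y₁)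
      = PowerSeries.coeff j D₀ := by
    intro j hj
    have h3 : (PowerSeries.X : PowerSeries k') ^ M ∣ Hpoly.derivative.eval y₁ - D₀ :=
      dvd_trans hyx (Polynomial.sub_dvd_eval_sub y₁ x₂ Hpoly.derivative)
    have h4 := PowerSeries.X_pow_dvd_iff.mp h3 j (by omega)
    rw [map_sub, sub_eq_zero] at h4
    exact h4
  have hGders : PowerSeries.map ι (G.derivative.eval y₀) = Hpoly.derivative.eval y₁ := by
    rw [evalpush2, ← Polynomial.derivative_map, hGH, hy₁]
  have hGd1 : (PowerSeries.X : PowerSeries kn) ^ c ∣ G.derivative.eval y₀ := by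
    rw [PowerSeries.X_pow_dvd_iff]
    intro j hj
    apply hιinj
    rw [← PowerSeries.coeff_map, hGders, hD₁ j (by omega), hclt j hj, map_zero]
  have hGd2 : ¬ (PowerSeries.X : PowerSeries kn) ^ (c+1) ∣ G.derivative.eval y₀ := by
    intro hdvd
    apply hcne
    have h5 := PowerSeries.X_pow_dvd_iff.mp hdvd c (by omega)
    rw [← hD₁ c le_rfl, ← hGders, PowerSeries.coeff_map, h5, map_zero]
  obtain ⟨z₀, hz₀⟩ := hensel_root G y₀ c hGy0 hGd1 hGd2
  set z₁ := PowerSeries.map ι z₀ with hz₁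
  have hHz₁ : Hpoly.eval z₁ = 0 := by rw [hz₁, ← hGH, ← evalpush2, hz₀, map_zero]
  set ZL := ofPS z₁ with hZL
  have hWZL : Wbar.eval ZL = 0 := by rw [hZL, ← hHW, ← evalpush, hHz₁, map_zero]
  set r : (LaurentSeries k') := s⁻¹ * ZL with hrdef
  have hsr : s * r = ZL := by rw [hrdef, ← mul_assoc, mul_inv_cancel₀ hs0, one_mul]
  have hfr0 : fbar.eval r = 0 := by
    have h := Polynomial.scaleRoots_eval₂_mul (p := fbar) (RingHom.id (LaurentSeries k')) r s
    simp only [RingHom.id_apply, eval₂_id'] at h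
    rw [hsr, hWZL] at h
    rcases mul_eq_zero.mp h.symm with h' | h'
    · exact absurd h' (pow_ne_zero _ hs0)
    · exact h'
  have hz₁pow : ∀ m : ℕ, PowerSeries.coeff m (z₁ ^ p ^ n) ∈ Set.range (algebraMap k k') := by
    intro m
    rcases ps_coeff_pow_p_pow p hp z₁ n m with ⟨j, hj⟩ | h0
    · rw [hj, hz₁, PowerSeries.coeff_map]
      exact (PowerSeries.coeff j z₀).2
    · rw [h0]
      exact ⟨0, map_zero _⟩
  obtain ⟨w₀, hw₀⟩ := ps_mem_map_range (algebraMap k k') _ hz₁pow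
  have hsq : ofPS (PowerSeries.map (algebraMap k k') w₀)
      = α (HahnSeries.ofPowerSeries ℤ k w₀) := by
    ext g
    have hαco : ∀ (w : (LaurentSeries k)) (g : ℤ), (α w).coeff g = algebraMap k k' (w.coeff g) := fun w g => rfl
    rcases lt_or_ge g 0 with hg | hg
    · rw [hofPS, laurent_coeff_nonneg_of_ofPS _ _ hg, hαco,
        laurent_coeff_nonneg_of_ofPS _ _ hg, map_zero]
    · rw [hofPS, laurent_coeff_ofPS _ _ hg, PowerSeries.coeff_map, hαco,
        laurent_coeff_ofPS _ _ hg]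
  have hZLpow : ZL ^ p ^ n = α (HahnSeries.ofPowerSeries ℤ k w₀) := by
    rw [hZL, ← map_pow, ← hw₀, hsq]
  have hsα : α (HahnSeries.single (N:ℤ) (1:k)) = s := by
    ext g
    have hαco : (α (HahnSeries.single (N:ℤ) (1:k))).coeff g
        = algebraMap k k' ((HahnSeries.single ((N:ℤ)) (1:k)).coeff g) := rfl
    rw [hαco, hsdef, HahnSeries.coeff_single, HahnSeries.coeff_single]
    split_ifs <;> simp
  refine ⟨n, r, ((HahnSeries.single (N:ℤ) (1:k) : (LaurentSeries k))⁻¹) ^ p ^ n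
    * HahnSeries.ofPowerSeries ℤ k w₀, ?_, ?_⟩
  · rw [Polynomial.aeval_def, ← Polynomial.eval_map]
    exact hfr0
  · rw [map_mul, map_pow, map_inv₀, hsα, ← hZLpow, ← mul_pow, ← hrdef]
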